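/- Define S(l, x) = (1/4) ∑_{l₁=0}^{l} C(l,l₁) (√(c₊^{(l₁)}) + √(c₋^{(l₁)}))² where c₊^{(l₁)} = (1/2^l)(1+x/2)^{l-l₁}(1-x/2)^{l₁} and c₋^{(l₁)} = (1/2^l)(1-x/2)^{l-l₁}(1+x/2)^{l₁}. Then S(l, 0) = 1, the first derivative of S in x vanishes at 0, and the second derivative at 0 equals -l/8; hence 1 - S(l,x) = (l/16)x² + O(x³) as x → 0. -/

import Mathlib

open Asymptotics

/-- Near-optimal fidelity of the thermodynamic code with magnetizations ±d/2
under `l` deterministic erasures, as a function of `x = d/N`. -/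
noncomputable def thermoS (l : ℕ) (x : ℝ) : ℝ :=
  (1 / 4) * ∑ l₁ ∈ Finset.range (l + 1),
    (l.choose l₁ : ℝ) *
      (Real.sqrt ((1 / 2 ^ l) * (1 + x / 2) ^ (l - l₁) * (1 - x / 2) ^ l₁) +
        Real.sqrt ((1 / 2 ^ l) * (1 - x / 2) ^ (l - l₁) * (1 + x / 2) ^ l₁)) ^ 2

noncomputable def thermoG (l : ℕ) (x : ℝ) : ℝ :=
  1 / 2 + (1 - x ^ 2 / 4) ^ ((l : ℝ) / 2) / 2

lemma upos {x : ℝ} (hx : |x| < 2) : 0 < 1 - x ^ 2 / 4 := by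
  rcases abs_lt.mp hx with ⟨h1, h2⟩
  nlinarith

lemma thermoS_eq (l : ℕ) {x : ℝ} (hx : |x| < 2) : thermoS l x = thermoG l x := by
  rcases abs_lt.mp hx with ⟨hx1, hx2⟩
  have hu : (0:ℝ) < 1 - x ^ 2 / 4 := upos hx
  have hP : (0:ℝ) ≤ 1 + x / 2 := by linarith
  have hQ : (0:ℝ) ≤ 1 - x / 2 := by linarith
  have hc : (0:ℝ) < 1 / 2 ^ l := by positivity
  set P : ℝ := 1 + x / 2 with hPdef
  set Q : ℝ := 1 - x / 2 with hQdef
  set c : ℝ := 1 / 2 ^ l with hcdef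
  set u : ℝ := 1 - x ^ 2 / 4 with hudef
  have hsummand : ∀ l₁ ∈ Finset.range (l + 1),
      (l.choose l₁ : ℝ) *
        (Real.sqrt (c * P ^ (l - l₁) * Q ^ l₁) + Real.sqrt (c * Q ^ (l - l₁) * P ^ l₁)) ^ 2
      = c * (Q ^ l₁ * P ^ (l - l₁) * (l.choose l₁ : ℝ))
        + c * (P ^ l₁ * Q ^ (l - l₁) * (l.choose l₁ : ℝ))
        + (2 * c * u ^ ((l:ℝ)/2)) * (l.choose l₁ : ℝ) := by
    intro l₁ hl₁
    have hl₁' : l₁ ≤ l := Nat.lt_succ_iff.mp (Finset.mem_range.mp hl₁)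
    have hA : (0:ℝ) ≤ c * P ^ (l - l₁) * Q ^ l₁ := by positivity
    have hB : (0:ℝ) ≤ c * Q ^ (l - l₁) * P ^ l₁ := by positivity
    have hAB : (c * P ^ (l - l₁) * Q ^ l₁) * (c * Q ^ (l - l₁) * P ^ l₁)
        = (c * u ^ ((l:ℝ)/2)) ^ 2 := by
      have h1 : P ^ (l - l₁) * P ^ l₁ = P ^ l := by
        rw [← pow_add, Nat.sub_add_cancel hl₁']
      have h2 : Q ^ (l - l₁) * Q ^ l₁ = Q ^ l := by
        rw [← pow_add, Nat.sub_add_cancel hl₁']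
      have h3 : (u ^ ((l:ℝ)/2)) ^ 2 = u ^ l := by
        rw [← Real.rpow_natCast (u ^ ((l:ℝ)/2)) 2, ← Real.rpow_mul hu.le]
        norm_num
      have h4 : P ^ l * Q ^ l = u ^ l := by
        rw [← mul_pow]
        congr 1
        simp only [hPdef, hQdef, hudef]; ring
      calc (c * P ^ (l - l₁) * Q ^ l₁) * (c * Q ^ (l - l₁) * P ^ l₁)
          = c ^ 2 * ((P ^ (l - l₁) * P ^ l₁) * (Q ^ (l - l₁) * Q ^ l₁)) := by ring
        _ = c ^ 2 * (P ^ l * Q ^ l) := by rw [h1, h2]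
        _ = c ^ 2 * u ^ l := by rw [h4]
        _ = (c * u ^ ((l:ℝ)/2)) ^ 2 := by rw [mul_pow, h3]
    have hs : Real.sqrt (c * P ^ (l - l₁) * Q ^ l₁) * Real.sqrt (c * Q ^ (l - l₁) * P ^ l₁)
        = c * u ^ ((l:ℝ)/2) := by
      rw [← Real.sqrt_mul hA, hAB, Real.sqrt_sq (by positivity)]
    have hsqA := Real.sq_sqrt hA
    have hsqB := Real.sq_sqrt hB
    rw [add_sq]
    linear_combination (l.choose l₁ : ℝ) * hsqA + (l.choose l₁ : ℝ) * hsqB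
      + (2 * (l.choose l₁ : ℝ)) * hs
  rw [thermoS, Finset.sum_congr rfl hsummand]
  rw [Finset.sum_add_distrib, Finset.sum_add_distrib]
  have e1 : ∑ l₁ ∈ Finset.range (l + 1), c * (Q ^ l₁ * P ^ (l - l₁) * (l.choose l₁ : ℝ)) = 1 := by
    rw [← Finset.mul_sum, ← add_pow]
    have : Q + P = 2 := by simp [hPdef, hQdef]; ring
    rw [this, hcdef]
    field_simp
  have e2 : ∑ l₁ ∈ Finset.range (l + 1), c * (P ^ l₁ * Q ^ (l - l₁) * (l.choose l₁ : ℝ)) = 1 := by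
    rw [← Finset.mul_sum, ← add_pow]
    have : P + Q = 2 := by simp [hPdef, hQdef]; ring
    rw [this, hcdef]
    field_simp
  have e3 : ∑ l₁ ∈ Finset.range (l + 1), (2 * c * u ^ ((l:ℝ)/2)) * (l.choose l₁ : ℝ)
      = 2 * u ^ ((l:ℝ)/2) := by
    rw [← Finset.mul_sum]
    have : ∑ l₁ ∈ Finset.range (l + 1), (l.choose l₁ : ℝ) = 2 ^ l := by
      rw [← Nat.cast_sum]
      rw [Nat.sum_range_choose]
      push_cast; ring
    rw [this, hcdef]
    field_simp
  rw [e1, e2, e3, thermoG]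
  ring
noncomputable def thermoD (l : ℕ) (x : ℝ) : ℝ :=
  -((l : ℝ) / 8) * x * (1 - x ^ 2 / 4) ^ ((l : ℝ) / 2 - 1)

lemma inner_hasDerivAt (x : ℝ) : HasDerivAt (fun y : ℝ => 1 - y ^ 2 / 4) (-x / 2) x := by
  have h := ((hasDerivAt_pow 2 x).div_const 4).const_sub 1
  refine h.congr_deriv ?_
  push_cast; ring

lemma rpow_comp_hasDerivAt (p : ℝ) {x : ℝ} (hx : |x| < 2) :
    HasDerivAt (fun y : ℝ => (1 - y ^ 2 / 4) ^ p)
      (p * (1 - x ^ 2 / 4) ^ (p - 1) * (-x / 2)) x := by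
  have hu : (0:ℝ) < 1 - x ^ 2 / 4 := upos hx
  have houter := Real.hasDerivAt_rpow_const (x := 1 - x ^ 2 / 4) (p := p) (Or.inl hu.ne')
  exact houter.comp x (inner_hasDerivAt x)

lemma thermoG_hasDerivAt (l : ℕ) {x : ℝ} (hx : |x| < 2) :
    HasDerivAt (thermoG l) (thermoD l x) x := by
  have h := ((rpow_comp_hasDerivAt ((l:ℝ)/2) hx).div_const 2).const_add (1/2)
  refine h.congr_deriv ?_
  unfold thermoD
  ring

lemma thermoD_hasDerivAt_zero (l : ℕ) :
    HasDerivAt (thermoD l) (-(l : ℝ) / 8) 0 := by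
  have h1 : HasDerivAt (fun y : ℝ => -((l : ℝ) / 8) * y) (-((l:ℝ)/8)) 0 := by
    simpa using (hasDerivAt_id (0:ℝ)).const_mul (-((l:ℝ)/8))
  have h2 := rpow_comp_hasDerivAt ((l:ℝ)/2 - 1) (by norm_num : |(0:ℝ)| < 2)
  have h := h1.mul h2
  refine h.congr_deriv ?_
  norm_num [Real.one_rpow]
  ring

lemma ball_mem : ∀ᶠ x : ℝ in nhds 0, |x| < 2 := by
  have : Metric.ball (0:ℝ) 2 ∈ nhds (0:ℝ) := Metric.ball_mem_nhds 0 (by norm_num)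
  filter_upwards [this] with x hx
  simpa [Real.dist_eq] using hx

lemma ball_mem_at {x : ℝ} (hx : |x| < 2) : ∀ᶠ y : ℝ in nhds x, |y| < 2 := by
  have ho : IsOpen {y : ℝ | |y| < 2} := isOpen_lt (by fun_prop) continuous_const
  exact ho.eventually_mem hx

lemma thermo_eventually_eq (l : ℕ) {x : ℝ} (hx : |x| < 2) :
    thermoS l =ᶠ[nhds x] thermoG l := by
  filter_upwards [ball_mem_at hx] with y hy using thermoS_eq l hy

lemma deriv_thermo_eq (l : ℕ) {x : ℝ} (hx : |x| < 2) :
    deriv (thermoS l) x = thermoD l x := by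
  rw [(thermo_eventually_eq l hx).deriv_eq]
  exact (thermoG_hasDerivAt l hx).deriv

lemma deriv_thermo_eventually (l : ℕ) :
    deriv (thermoS l) =ᶠ[nhds 0] thermoD l := by
  filter_upwards [ball_mem] with x hx using deriv_thermo_eq l hx

lemma part1 (l : ℕ) : thermoS l 0 = 1 := by
  rw [thermoS_eq l (by norm_num), thermoG]
  norm_num

lemma part2 (l : ℕ) : deriv (thermoS l) 0 = 0 := by
  rw [deriv_thermo_eq l (by norm_num), thermoD]
  ring

lemma part3 (l : ℕ) : deriv (deriv (thermoS l)) 0 = -(l : ℝ) / 8 := by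
  rw [(deriv_thermo_eventually l).deriv_eq]
  exact (thermoD_hasDerivAt_zero l).deriv
lemma thermoH_analytic (l : ℕ) :
    AnalyticAt ℝ (fun x : ℝ => (1 - thermoG l x) - ((l : ℝ) / 16) * x ^ 2) 0 := by
  have hinner : AnalyticAt ℂ (fun z : ℂ => 1 - z ^ 2 / 4) 0 := by
    apply analyticAt_const.sub
    exact (analyticAt_id.pow 2).div analyticAt_const (by norm_num)
  have hC : AnalyticAt ℂ (fun z : ℂ => (1 - z ^ 2 / 4) ^ ((l : ℂ) / 2)) 0 := by
    apply hinner.cpow analyticAt_const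
    norm_num [Complex.one_mem_slitPlane]
  have hR0 : AnalyticAt ℝ
      (fun x : ℝ => ((1 - (Complex.ofRealCLM x) ^ 2 / 4) ^ ((l : ℂ) / 2))) 0 := by
    have hC2 : AnalyticAt ℝ (fun z : ℂ => (1 - z ^ 2 / 4) ^ ((l : ℂ) / 2))
        (Complex.ofRealCLM 0) := by
      simpa using hC.restrictScalars
    exact hC2.comp (Complex.ofRealCLM.analyticAt 0)
  have hR : AnalyticAt ℝ
      (fun x : ℝ => Complex.reCLM ((1 - (Complex.ofRealCLM x) ^ 2 / 4) ^ ((l : ℂ) / 2))) 0 :=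
    (Complex.reCLM.analyticAt _).comp hR0
  have hG : AnalyticAt ℝ (fun x : ℝ => (1 - x ^ 2 / 4) ^ ((l : ℝ) / 2)) 0 := by
    apply hR.congr
    filter_upwards [ball_mem] with x hx
    have hu := (upos hx).le
    have h1 : (1 - (Complex.ofRealCLM x) ^ 2 / 4) = (((1 - x ^ 2 / 4 : ℝ)) : ℂ) := by
      simp only [Complex.ofRealCLM_apply]
      push_cast; ring
    have h2 : ((l : ℂ) / 2) = (((l : ℝ) / 2 : ℝ) : ℂ) := by push_cast; ring
    rw [Complex.reCLM_apply, h1, h2, ← Complex.ofReal_cpow hu]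
    simp
  have : AnalyticAt ℝ (fun x : ℝ =>
      (1 - (1 / 2 + (1 - x ^ 2 / 4) ^ ((l : ℝ) / 2) / 2)) - ((l : ℝ) / 16) * x ^ 2) 0 := by
    apply AnalyticAt.sub
    · exact analyticAt_const.sub (analyticAt_const.add (hG.div analyticAt_const (by norm_num)))
    · exact analyticAt_const.mul (analyticAt_id.pow 2)
  exact this

lemma thermoH_deriv_zero (l : ℕ) :
    deriv (fun x : ℝ => (1 - thermoG l x) - ((l : ℝ) / 16) * x ^ 2) 0 = 0 ∧
    deriv (deriv (fun x : ℝ => (1 - thermoG l x) - ((l : ℝ) / 16) * x ^ 2)) 0 = 0 := by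
  have hD : ∀ {x : ℝ}, |x| < 2 → HasDerivAt
      (fun x : ℝ => (1 - thermoG l x) - ((l : ℝ) / 16) * x ^ 2)
      (-(thermoD l x) - ((l : ℝ) / 8) * x) x := by
    intro x hx
    have h := ((thermoG_hasDerivAt l hx).const_sub 1).sub
      ((hasDerivAt_pow 2 x).const_mul ((l : ℝ) / 16))
    refine h.congr_deriv ?_
    push_cast; ring
  constructor
  · rw [(hD (by norm_num : |(0:ℝ)| < 2)).deriv]
    simp [thermoD]
  · have hev : deriv (fun x : ℝ => (1 - thermoG l x) - ((l : ℝ) / 16) * x ^ 2)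
        =ᶠ[nhds 0] fun x : ℝ => -(thermoD l x) - ((l : ℝ) / 8) * x := by
      filter_upwards [ball_mem] with x hx using (hD hx).deriv
    rw [hev.deriv_eq]
    have h2 : HasDerivAt (fun x : ℝ => -(thermoD l x) - ((l : ℝ) / 8) * x)
        (-(-(l : ℝ) / 8) - ((l : ℝ) / 8)) 0 := by
      exact (thermoD_hasDerivAt_zero l).neg.sub
        (by simpa using (hasDerivAt_id (0:ℝ)).const_mul ((l : ℝ) / 8))
    rw [h2.deriv]
    ring

lemma part4 (l : ℕ) :
    (fun x : ℝ => (1 - thermoS l x) - ((l : ℝ) / 16) * x ^ 2) =O[nhds 0]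
      fun x : ℝ => x ^ 3 := by
  set h₀ : ℝ → ℝ := fun x => (1 - thermoG l x) - ((l : ℝ) / 16) * x ^ 2 with hh₀
  have heq : (fun x : ℝ => (1 - thermoS l x) - ((l : ℝ) / 16) * x ^ 2) =ᶠ[nhds 0] h₀ := by
    filter_upwards [ball_mem] with x hx
    rw [hh₀, thermoS_eq l hx]
  refine heq.trans_isBigO ?_
  obtain ⟨pS, hpS⟩ := thermoH_analytic l
  obtain ⟨r, hrball⟩ := hpS
  have hiter : ∀ k < 3, iteratedDeriv k h₀ 0 = 0 := by
    intro k hk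
    interval_cases k
    · rw [iteratedDeriv_zero]
      simp [hh₀, thermoG, Real.one_rpow]
      norm_num
    · rw [iteratedDeriv_one]
      exact (thermoH_deriv_zero l).1
    · rw [iteratedDeriv_succ, iteratedDeriv_one]
      exact (thermoH_deriv_zero l).2
  have hcoeff : ∀ k < 3, ∀ y : ℝ, pS k (fun _ => y) = 0 := by
    intro k hk y
    have hfact := hrball.factorial_smul y k
    have hrhs : iteratedFDeriv ℝ k h₀ 0 (fun _ => y) = 0 := by
      have hm := (iteratedFDeriv ℝ k h₀ 0).map_smul_univ (fun _ => y) (fun _ => 1)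
      simp only [smul_eq_mul, mul_one, Finset.prod_const, Finset.card_univ,
        Fintype.card_fin] at hm
      rw [hm, ← iteratedDeriv_eq_iteratedFDeriv, hiter k hk]
      simp
    rw [hrhs] at hfact
    have hk0 : (Nat.factorial k : ℝ) ≠ 0 := by
      exact_mod_cast Nat.factorial_ne_zero k
    rw [nsmul_eq_mul] at hfact
    exact (mul_eq_zero.mp hfact).resolve_left hk0
  have hps0 : ∀ y : ℝ, pS.partialSum 3 y = 0 := by
    intro y
    unfold FormalMultilinearSeries.partialSum
    refine Finset.sum_eq_zero fun k hk => ?_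
    rw [hcoeff k (Finset.mem_range.mp hk) y]
  have hBig := (hrball.hasFPowerSeriesAt).isBigO_sub_partialSum_pow 3
  have hBig' : h₀ =O[nhds 0] fun y : ℝ => ‖y‖ ^ 3 := by
    simpa [hps0] using hBig
  apply IsBigO.of_norm_right
  simpa [norm_pow] using hBig'


theorem thermo_l_erasure_infidelity (l : ℕ) :
    thermoS l 0 = 1 ∧
    deriv (thermoS l) 0 = 0 ∧
    deriv (deriv (thermoS l)) 0 = -(l : ℝ) / 8 ∧
    (fun x : ℝ => (1 - thermoS l x) - ((l : ℝ) / 16) * x ^ 2) =O[nhds 0]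
      fun x : ℝ => x ^ 3 := by
  exact ⟨part1 l, part2 l, part3 l, part4 l⟩
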